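/- Let [ABCD] be a geodesic quadrilateral in the hyperbolic plane with angles at B, C, D each at least π/2, and with angle α > 0 at A. If cosh(d(A,B)) · sin(α) > 1, then cosh(d(C,D)) ≥ cosh(d(A,B)) · sin(α). -/

import Mathlib

open Real

/-- The angle at vertex `B` between the hyperbolic geodesic segments `BA` and `BC`,
recovered from the side lengths via the hyperbolic law of cosines. -/
noncomputable def hangle (A B C : UpperHalfPlane) : ℝ :=
  Real.arccos ((Real.cosh (dist B A) * Real.cosh (dist B C) - Real.cosh (dist A C)) /
    (Real.sinh (dist B A) * Real.sinh (dist B C)))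

/-- From a lower bound on `arccos x` we get an upper bound on `x`. -/
lemma arccos_ge_imp {x β : ℝ} (hβ0 : 0 < β) (h : β ≤ Real.arccos x) : x ≤ Real.cos β := by
  rcases le_or_gt 1 x with h1 | h1
  · exfalso
    have h0 : Real.arccos x = 0 := Real.arccos_eq_zero.mpr h1
    rw [h0] at h; linarith
  rcases le_or_gt x (-1) with h2 | h2
  · exact h2.trans (Real.neg_one_le_cos β)
  · have hπ : Real.arccos x ≤ π := Real.arccos_le_pi x
    have := Real.cos_le_cos_of_nonneg_of_le_pi hβ0.le hπ h
    rwa [Real.cos_arccos h2.le h1.le] at this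

/-- The vertex quantity: time component of the Lorentz embedding of the upper half-plane. -/
noncomputable def lorT (x y : ℝ) : ℝ := (x ^ 2 + y ^ 2 + 1) / (2 * y)

noncomputable def lorU (x y : ℝ) : ℝ := (x ^ 2 + y ^ 2 - 1) / (2 * y)

noncomputable def lorW (x y : ℝ) : ℝ := x / y

/-- Determinant of the three Lorentz vectors of three points of the upper half-plane. -/
noncomputable def lorDet (x1 y1 x2 y2 x3 y3 : ℝ) : ℝ :=
  lorT x1 y1 * (lorU x2 y2 * lorW x3 y3 - lorW x2 y2 * lorU x3 y3)
    - lorU x1 y1 * (lorT x2 y2 * lorW x3 y3 - lorW x2 y2 * lorT x3 y3)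
    + lorW x1 y1 * (lorT x2 y2 * lorU x3 y3 - lorU x2 y2 * lorT x3 y3)

/-- Hyperbolic cosine of the distance in coordinates. -/
noncomputable def lorK (x1 y1 x2 y2 : ℝ) : ℝ := ((x1 - x2) ^ 2 + y1 ^ 2 + y2 ^ 2) / (2 * y1 * y2)

lemma J1gen (x1 y1 x2 y2 x3 y3 : ℝ) (h1 : 0 < y1) (h2 : 0 < y2) (h3 : 0 < y3) :
    (lorK x1 y1 x2 y2 ^ 2 - 1) * (lorK x2 y2 x3 y3 ^ 2 - 1) -
      (lorK x2 y2 x3 y3 * lorK x1 y1 x2 y2 - lorK x1 y1 x3 y3) ^ 2 =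
      lorDet x1 y1 x2 y2 x3 y3 ^ 2 := by
  unfold lorK lorDet lorT lorU lorW
  field_simp
  ring

lemma J3gen (xa ya xb yb xc yc xd yd : ℝ) (ha : 0 < ya) (hb : 0 < yb) (hc : 0 < yc)
    (hd : 0 < yd) :
    lorK xa ya xc yc * lorK xb yb xc yc * (lorK xc yc xd yd ^ 2 - 1) -
      (lorK xc yc xd yd * lorK xa ya xc yc - lorK xa ya xd yd) *
        (lorK xc yc xd yd * lorK xb yb xc yc - lorK xb yb xd yd) -
      lorK xa ya xb yb * (lorK xc yc xd yd ^ 2 - 1) =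
      lorDet xa ya xc yc xd yd * lorDet xb yb xc yc xd yd := by
  unfold lorK lorDet lorT lorU lorW
  field_simp
  ring

/-- The core algebraic lemma: from the planarity identities `J1`, `J2`, `J3` and the
three angle conditions, we get both the acuteness of the angle at `A` and the key
quantitative bound. -/
lemma nonneg_of_mul_nonneg'' {K X : ℝ} (hK : 0 < K) (h : 0 ≤ K * X) : 0 ≤ X := by
  have h' : K * 0 ≤ K * X := by simpa using h
  exact le_of_mul_le_mul_left h' hK

lemma le_of_sq_le'' {a b : ℝ} (ha : 0 ≤ a) (hb : 0 < b) (h : a ^ 2 ≤ b ^ 2) : a ≤ b := by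
  by_contra hc
  push_neg at hc
  have h1 : b * b < a * a := mul_self_lt_mul_self hb.le hc
  have h2 : a ^ 2 = a * a := by ring
  have h3 : b ^ 2 = b * b := by ring
  linarith

lemma core (p q r s e f dA dB : ℝ)
    (hp : 1 < p) (hq : 1 < q) (hr : 1 < r) (hs : 1 < s)
    (hB : p * q ≤ e) (hC : q * r ≤ f) (hD : r * s ≤ e)
    (J1 : (e ^ 2 - 1) * (r ^ 2 - 1) - (r * e - s) ^ 2 = dA ^ 2)
    (J2 : (q ^ 2 - 1) * (r ^ 2 - 1) - (r * q - f) ^ 2 = dB ^ 2)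
    (J3 : e * q * (r ^ 2 - 1) - (r * e - s) * (r * q - f) - p * (r ^ 2 - 1) = dA * dB) :
    f ≤ p * s ∧
      p ^ 2 * ((p ^ 2 - 1) * (s ^ 2 - 1) - (p * s - f) ^ 2) ≤
        r ^ 2 * ((p ^ 2 - 1) * (s ^ 2 - 1)) := by
  -- consequences of the planarity identities
  have key1 : q * (dA * dB) =
      e * dB ^ 2 + (r ^ 2 - 1) * (e - p * q) + (r * q - f) * (e * (r * q - f) - (r * e - s) * q) := by
    rw [← J2, ← J3]; ring
  have keyJ4 : (r ^ 2 - 1) * e * (p * s - f) =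
      s * (q * dA ^ 2 - e * (dA * dB)) +
        ((r * e - s) * s - (r ^ 2 - 1)) * ((r * e - s) * q - e * (r * q - f)) := by
    rw [← J1, ← J3]; ring
  have J6 : (r ^ 2 - 1) * (p ^ 2 - 1) + (r ^ 2 - 1) * (e - p * q) ^ 2 -
      ((r * e - s) - p * (r * q - f)) ^ 2 = (dA - p * dB) ^ 2 := by
    linear_combination J1 - 2 * p * J3 + p ^ 2 * J2
  clear J1 J2 J3
  have hp0 : (0:ℝ) < p := by linarith
  have hq0 : (0:ℝ) < q := by linarith
  have hr0 : (0:ℝ) < r := by linarith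
  have hs0 : (0:ℝ) < s := by linarith
  have hp2 : (0:ℝ) < p ^ 2 - 1 := by
    have h1 : (0:ℝ) < (p - 1) * (p + 1) := mul_pos (by linarith) (by linarith)
    have h2 : (p - 1) * (p + 1) = p ^ 2 - 1 := by ring
    linarith
  have hr2 : (0:ℝ) < r ^ 2 - 1 := by
    have h1 : (0:ℝ) < (r - 1) * (r + 1) := mul_pos (by linarith) (by linarith)
    have h2 : (r - 1) * (r + 1) = r ^ 2 - 1 := by ring
    linarith
  have hs2 : (0:ℝ) < s ^ 2 - 1 := by
    have h1 : (0:ℝ) < (s - 1) * (s + 1) := mul_pos (by linarith) (by linarith)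
    have h2 : (s - 1) * (s + 1) = s ^ 2 - 1 := by ring
    linarith
  have he1 : (1:ℝ) < e := by
    have h1 : (1:ℝ) * 1 < p * q := mul_lt_mul'' hp hq (by norm_num) (by norm_num)
    linarith
  have hf1 : (1:ℝ) < f := by
    have h1 : (1:ℝ) * 1 < q * r := mul_lt_mul'' hq hr (by norm_num) (by norm_num)
    linarith
  have he0 : (0:ℝ) < e := by linarith
  have hA0 : 0 ≤ r * e - s := by
    have h' : r * (r * s) ≤ r * e := mul_le_mul_of_nonneg_left hD hr0.le
    have h'' : 0 ≤ s * (r ^ 2 - 1) := mul_nonneg hs0.le hr2.le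
    have hid : r * (r * s) - s = s * (r ^ 2 - 1) := by ring
    linarith
  have hB0 : r * q - f ≤ 0 := by
    have : q * r = r * q := mul_comm q r
    linarith
  have hterm : 0 ≤ (r * q - f) * (e * (r * q - f) - (r * e - s) * q) := by
    have h1 : e * (r * q - f) ≤ 0 := mul_nonpos_of_nonneg_of_nonpos he0.le hB0
    have h2 : 0 ≤ (r * e - s) * q := mul_nonneg hA0 hq0.le
    have h3 : 0 ≤ (-(r * q - f)) * (-(e * (r * q - f) - (r * e - s) * q)) :=
      mul_nonneg (by linarith) (by linarith)
    have h4 : (-(r * q - f)) * (-(e * (r * q - f) - (r * e - s) * q)) =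
        (r * q - f) * (e * (r * q - f) - (r * e - s) * q) := by ring
    linarith
  have hepq : 0 ≤ e - p * q := by linarith
  have ht1 : 0 ≤ (r ^ 2 - 1) * (e - p * q) := mul_nonneg hr2.le hepq
  have ht2 : 0 ≤ e * dB ^ 2 := mul_nonneg he0.le (sq_nonneg dB)
  have hmuK : 0 ≤ q * (dA * dB) := by linarith
  have hmu : 0 ≤ dA * dB := nonneg_of_mul_nonneg'' hq0 hmuK
  have h1ineq : e * dB ^ 2 ≤ q * (dA * dB) := by linarith
  have h2 : e * (dA * dB) ≤ q * dA ^ 2 := by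
    rcases eq_or_ne dB 0 with h0 | h0
    · have hz : dA * dB = 0 := by rw [h0]; ring
      rw [hz, mul_zero]
      positivity
    · have hb2 : 0 < dB ^ 2 := by positivity
      have hmul : e * dB ^ 2 * (dA * dB) ≤ q * (dA * dB) * (dA * dB) :=
        mul_le_mul_of_nonneg_right h1ineq hmu
      have hid : (q * dA ^ 2 - e * (dA * dB)) * dB ^ 2 =
          q * (dA * dB) * (dA * dB) - e * dB ^ 2 * (dA * dB) := by ring
      have h9 : 0 ≤ (q * dA ^ 2 - e * (dA * dB)) * dB ^ 2 := by linarith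
      have h9' : 0 ≤ dB ^ 2 * (q * dA ^ 2 - e * (dA * dB)) := by linarith [mul_comm (q * dA ^ 2 - e * (dA * dB)) (dB ^ 2)]
      have h10 := nonneg_of_mul_nonneg'' hb2 h9'
      linarith
  have hAs : 0 ≤ (r * e - s) * s - (r ^ 2 - 1) := by
    have h' : r * s * (r * s) ≤ r * s * e := mul_le_mul_of_nonneg_left hD (by positivity)
    have h'' : 0 ≤ (r ^ 2 - 1) * (s ^ 2 - 1) := mul_nonneg hr2.le hs2.le
    have hid : (r * e - s) * s - (r ^ 2 - 1) =
        (r * s * e - r * s * (r * s)) + (r ^ 2 - 1) * (s ^ 2 - 1) := by ring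
    linarith
  have hef : s * q ≤ e * f := by
    have h' : (r * s) * (q * r) ≤ e * f :=
      mul_le_mul hD hC (by positivity) he0.le
    have h'' : 0 ≤ s * q * (r ^ 2 - 1) := mul_nonneg (mul_nonneg hs0.le hq0.le) hr2.le
    have hid : (r * s) * (q * r) - s * q = s * q * (r ^ 2 - 1) := by ring
    linarith
  have hAqeB : 0 ≤ (r * e - s) * q - e * (r * q - f) := by
    have hid : (r * e - s) * q - e * (r * q - f) = e * f - s * q := by ring
    linarith
  have hB1 : f ≤ p * s := by
    have t3 : 0 ≤ s * (q * dA ^ 2 - e * (dA * dB)) := mul_nonneg hs0.le (by linarith)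
    have t4 : 0 ≤ ((r * e - s) * s - (r ^ 2 - 1)) * ((r * e - s) * q - e * (r * q - f)) :=
      mul_nonneg hAs hAqeB
    have hKX : 0 ≤ ((r ^ 2 - 1) * e) * (p * s - f) := by
      have hid : ((r ^ 2 - 1) * e) * (p * s - f) = (r ^ 2 - 1) * e * (p * s - f) := by ring
      linarith
    have := nonneg_of_mul_nonneg'' (mul_pos hr2 he0) hKX
    linarith
  refine ⟨hB1, ?_⟩
  have hPS : 0 ≤ (p ^ 2 - 1) * (s ^ 2 - 1) := mul_nonneg hp2.le hs2.le
  have tR : (p ^ 2 - 1) * (s ^ 2 - 1) ≤ r ^ 2 * ((p ^ 2 - 1) * (s ^ 2 - 1)) := by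
    have h1 : (1:ℝ) ≤ r ^ 2 := by linarith
    have h2 := mul_le_mul_of_nonneg_right h1 hPS
    linarith
  rcases le_total (p * f) s with hcase | hcase
  · -- easy case : p * f ≤ s
    have k2 : s * (p ^ 2 - 1) ≤ p * (p * s - f) := by
      have hid : p * (p * s - f) - s * (p ^ 2 - 1) = s - p * f := by ring
      linarith
    have h0 : 0 ≤ s * (p ^ 2 - 1) := mul_nonneg hs0.le hp2.le
    have k2' : (s * (p ^ 2 - 1)) * (s * (p ^ 2 - 1)) ≤ (p * (p * s - f)) * (p * (p * s - f)) :=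
      mul_self_le_mul_self h0 k2
    have e5 : (s * (p ^ 2 - 1)) * (s * (p ^ 2 - 1)) = s ^ 2 * (p ^ 2 - 1) ^ 2 := by ring
    have e5' : (p * (p * s - f)) * (p * (p * s - f)) = p ^ 2 * (p * s - f) ^ 2 := by ring
    have e6 : p ^ 2 * ((p ^ 2 - 1) * (s ^ 2 - 1)) - s ^ 2 * (p ^ 2 - 1) ^ 2 =
        (p ^ 2 - 1) * (s ^ 2 - p ^ 2) := by ring
    have t5 : (p ^ 2 - 1) * (s ^ 2 - p ^ 2) ≤ (p ^ 2 - 1) * (s ^ 2 - 1) :=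
      mul_le_mul_of_nonneg_left (by linarith) hp2.le
    linarith
  · -- hard case : s ≤ p * f
    have hsqN1 : ((r * e - s) - p * (r * q - f)) ^ 2 ≤
        (r ^ 2 - 1) * (p ^ 2 - 1) + (r ^ 2 - 1) * (e - p * q) ^ 2 := by
      have := sq_nonneg (dA - p * dB)
      linarith
    have m3 : (p * f - s) ^ 2 ≤ (r ^ 2 - 1) * (p ^ 2 - 1) := by
      set c := Real.sqrt (r ^ 2 - 1) with hcdef
      set N1 := (r * e - s) - p * (r * q - f) with hN1
      set N0 := e - p * q with hN0'
      have hcsq : c ^ 2 = r ^ 2 - 1 := Real.sq_sqrt hr2.le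
      have hcnn : 0 ≤ c := Real.sqrt_nonneg _
      have hcr : c ≤ r := by
        have h1 : r ^ 2 - 1 ≤ r ^ 2 := by linarith
        have h2 : c ≤ Real.sqrt (r ^ 2) := Real.sqrt_le_sqrt h1
        have h3 : Real.sqrt (r ^ 2) = r := by
          rw [Real.sqrt_sq hr0.le]
        linarith
      have hJ5 : p * f - s = N1 - r * N0 := by rw [hN1, hN0']; ring
      have h0' : c * N0 ≤ r * N0 := mul_le_mul_of_nonneg_right hcr hepq
      have h1 : p * f - s ≤ N1 - c * N0 := by linarith
      have h20 : (0:ℝ) ≤ p * f - s := by linarith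
      have h2' : 0 ≤ N1 - c * N0 := le_trans h20 h1
      have e7 : (N1 - c * N0) * (N1 + c * N0) = N1 ^ 2 - c ^ 2 * N0 ^ 2 := by ring
      rw [hcsq] at e7
      have h3' : 0 ≤ (r ^ 2 - 1) * N0 ^ 2 := mul_nonneg hr2.le (sq_nonneg _)
      have h3 : (N1 - c * N0) * (N1 + c * N0) ≤ (r ^ 2 - 1) * (p ^ 2 - 1) := by
        have h31 : 0 ≤ (r ^ 2 - 1) * (N0 ^ 2 - N0 ^ 2) := by simp
        linarith
      have h4 : N1 - c * N0 ≤ N1 + c * N0 := by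
        have := mul_nonneg hcnn hepq
        have hcn0 : 0 ≤ c * N0 := by
          rw [hN0']; exact this
        linarith
      have s1 : (p * f - s) * (p * f - s) ≤ (N1 - c * N0) * (N1 - c * N0) :=
        mul_self_le_mul_self h20 h1
      have s2 : (N1 - c * N0) * (N1 - c * N0) ≤ (N1 - c * N0) * (N1 + c * N0) :=
        mul_le_mul_of_nonneg_left h4 h2'
      have e8 : (p * f - s) ^ 2 = (p * f - s) * (p * f - s) := by ring
      linarith
    have m4 : (s ^ 2 - 1) * (p * f - s) ^ 2 + p ^ 2 * (p * s - f) ^ 2 -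
        (p ^ 2 - 1) ^ 2 * (s ^ 2 - 1) = (p * s * f - p ^ 2 - s ^ 2 + 1) ^ 2 := by ring
    have m3' : (p * f - s) ^ 2 * (s ^ 2 - 1) ≤ ((r ^ 2 - 1) * (p ^ 2 - 1)) * (s ^ 2 - 1) :=
      mul_le_mul_of_nonneg_right m3 hs2.le
    have hsqQ : 0 ≤ (p * s * f - p ^ 2 - s ^ 2 + 1) ^ 2 := sq_nonneg _
    have efin : r ^ 2 * ((p ^ 2 - 1) * (s ^ 2 - 1)) -
        p ^ 2 * ((p ^ 2 - 1) * (s ^ 2 - 1) - (p * s - f) ^ 2) =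
        ((r ^ 2 - 1) * ((p ^ 2 - 1) * (s ^ 2 - 1)) - (p * f - s) ^ 2 * (s ^ 2 - 1)) +
          ((s ^ 2 - 1) * (p * f - s) ^ 2 + p ^ 2 * (p * s - f) ^ 2 -
            (p ^ 2 - 1) ^ 2 * (s ^ 2 - 1)) := by ring
    have hfin2 : (p * f - s) ^ 2 * (s ^ 2 - 1) ≤ (r ^ 2 - 1) * ((p ^ 2 - 1) * (s ^ 2 - 1)) := by
      have hid : ((r ^ 2 - 1) * (p ^ 2 - 1)) * (s ^ 2 - 1) =
          (r ^ 2 - 1) * ((p ^ 2 - 1) * (s ^ 2 - 1)) := by ring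
      linarith
    linarith

set_option maxHeartbeats 1000000 in
/-- For a geodesic quadrilateral `[ABCD]` in the hyperbolic plane whose interior
angles at `B`, `C`, `D` are at least `π/2` and whose angle at `A` is at least
`α > 0`: if `cosh(d(A,B)) · sin α > 1` then
`cosh(d(C,D)) ≥ cosh(d(A,B)) · sin α`. -/
theorem cosh_ge_of_three_right_angles
    (A B C D : UpperHalfPlane) (α : ℝ)
    (hAB : A ≠ B) (hBC : B ≠ C) (hCD : C ≠ D) (hDA : D ≠ A)
    (hα : 0 < α)
    (hB : hangle A B C ≥ π / 2) (hC : hangle B C D ≥ π / 2)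
    (hD : hangle C D A ≥ π / 2)
    (hA : hangle D A B ≥ α)
    (hbig : Real.cosh (dist A B) * Real.sin α > 1) :
    Real.cosh (dist C D) ≥ Real.cosh (dist A B) * Real.sin α := by
  -- distances are positive
  have dAB : 0 < dist A B := dist_pos.2 hAB
  have dBC : 0 < dist B C := dist_pos.2 hBC
  have dCD : 0 < dist C D := dist_pos.2 hCD
  have dAD : 0 < dist A D := dist_pos.2 (fun h => hDA h.symm)
  -- cosh distances in coordinates
  have hKform : ∀ z w : UpperHalfPlane,
      Real.cosh (dist z w) = lorK z.re z.im w.re w.im := by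
    intro z w
    rw [UpperHalfPlane.cosh_dist']; rfl
  set p := Real.cosh (dist A B) with hpdef
  set q := Real.cosh (dist B C) with hqdef
  set r := Real.cosh (dist C D) with hrdef
  set s := Real.cosh (dist A D) with hsdef
  set e := Real.cosh (dist A C) with hedef
  set f := Real.cosh (dist B D) with hfdef
  have hp : 1 < p := by rw [hpdef]; exact Real.one_lt_cosh.2 dAB.ne'
  have hq : 1 < q := by rw [hqdef]; exact Real.one_lt_cosh.2 dBC.ne'
  have hr : 1 < r := by rw [hrdef]; exact Real.one_lt_cosh.2 dCD.ne'
  have hs : 1 < s := by rw [hsdef]; exact Real.one_lt_cosh.2 dAD.ne'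
  -- extract the angle hypotheses
  have sinhAB : 0 < Real.sinh (dist A B) := Real.sinh_pos_iff.2 dAB
  have sinhBC : 0 < Real.sinh (dist B C) := Real.sinh_pos_iff.2 dBC
  have sinhCD : 0 < Real.sinh (dist C D) := Real.sinh_pos_iff.2 dCD
  have sinhAD : 0 < Real.sinh (dist A D) := Real.sinh_pos_iff.2 dAD
  have hπ2 : (0:ℝ) < π / 2 := by positivity
  have hBnum : p * q ≤ e := by
    have h1 := arccos_ge_imp hπ2 hB
    rw [Real.cos_pi_div_two] at h1
    have hden : 0 < Real.sinh (dist B A) * Real.sinh (dist B C) := by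
      rw [dist_comm B A]; exact mul_pos sinhAB sinhBC
    have h2 : Real.cosh (dist B A) * Real.cosh (dist B C) - Real.cosh (dist A C) ≤ 0 := by
      have := (div_le_iff₀ hden).1 h1
      linarith [this]
    rw [dist_comm B A] at h2
    rw [hpdef, hqdef, hedef]; linarith
  have hCnum : q * r ≤ f := by
    have h1 := arccos_ge_imp hπ2 hC
    rw [Real.cos_pi_div_two] at h1
    have hden : 0 < Real.sinh (dist C B) * Real.sinh (dist C D) := by
      rw [dist_comm C B]; exact mul_pos sinhBC sinhCD
    have h2 : Real.cosh (dist C B) * Real.cosh (dist C D) - Real.cosh (dist B D) ≤ 0 := by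
      have := (div_le_iff₀ hden).1 h1
      linarith [this]
    rw [dist_comm C B] at h2
    rw [hqdef, hrdef, hfdef]; linarith
  have hDnum : r * s ≤ e := by
    have h1 := arccos_ge_imp hπ2 hD
    rw [Real.cos_pi_div_two] at h1
    have hden : 0 < Real.sinh (dist D C) * Real.sinh (dist D A) := by
      rw [dist_comm D C, dist_comm D A]; exact mul_pos sinhCD sinhAD
    have h2 : Real.cosh (dist D C) * Real.cosh (dist D A) - Real.cosh (dist C A) ≤ 0 := by
      have := (div_le_iff₀ hden).1 h1
      linarith [this]
    rw [dist_comm D C, dist_comm D A, dist_comm C A] at h2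
    rw [hrdef, hsdef, hedef]; linarith
  -- planarity identities
  have imA := A.im_pos
  have imB := B.im_pos
  have imC := C.im_pos
  have imD := D.im_pos
  set dA := lorDet A.re A.im C.re C.im D.re D.im with hdAdef
  set dB := lorDet B.re B.im C.re C.im D.re D.im with hdBdef
  have J1 : (e ^ 2 - 1) * (r ^ 2 - 1) - (r * e - s) ^ 2 = dA ^ 2 := by
    rw [hedef, hrdef, hsdef, hKform, hKform, hKform, hdAdef]
    exact J1gen A.re A.im C.re C.im D.re D.im imA imC imD
  have J2 : (q ^ 2 - 1) * (r ^ 2 - 1) - (r * q - f) ^ 2 = dB ^ 2 := by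
    rw [hqdef, hrdef, hfdef, hKform, hKform, hKform, hdBdef]
    exact J1gen B.re B.im C.re C.im D.re D.im imB imC imD
  have J3 : e * q * (r ^ 2 - 1) - (r * e - s) * (r * q - f) - p * (r ^ 2 - 1) = dA * dB := by
    rw [hedef, hqdef, hrdef, hsdef, hfdef, hpdef, hKform, hKform, hKform, hKform, hKform,
      hKform, hdAdef, hdBdef]
    exact J3gen A.re A.im B.re B.im C.re C.im D.re D.im imA imB imC imD
  -- apply the core lemma
  obtain ⟨hB1, hB2⟩ := core p q r s e f dA dB hp hq hr hs hBnum hCnum hDnum J1 J2 J3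
  clear J1 J2 J3
  -- glue : extract the angle at A
  have hαπ : α ≤ π := le_trans hA (Real.arccos_le_pi _)
  have hsinα : 0 ≤ Real.sin α := Real.sin_nonneg_of_nonneg_of_le_pi hα.le hαπ
  have hwle : (s * p - f) / (Real.sinh (dist A D) * Real.sinh (dist A B)) ≤ Real.cos α := by
    have h1 := arccos_ge_imp hα hA
    rw [dist_comm D B] at h1
    rw [hsdef, hpdef, hfdef]
    exact h1
  have hden : 0 < Real.sinh (dist A D) * Real.sinh (dist A B) := mul_pos sinhAD sinhAB
  have hnum0 : 0 ≤ s * p - f := by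
    have : p * s = s * p := mul_comm p s
    linarith
  have hcos0 : 0 ≤ Real.cos α :=
    le_trans (div_nonneg hnum0 hden.le) hwle
  have hnum : s * p - f ≤ Real.cos α * (Real.sinh (dist A D) * Real.sinh (dist A B)) :=
    (div_le_iff₀ hden).1 hwle
  have hS2 : Real.sinh (dist A D) ^ 2 = s ^ 2 - 1 := by
    rw [Real.sinh_sq, hsdef]
  have hP2 : Real.sinh (dist A B) ^ 2 = p ^ 2 - 1 := by
    rw [Real.sinh_sq, hpdef]
  have hsq : (s * p - f) ^ 2 ≤ Real.cos α ^ 2 * ((p ^ 2 - 1) * (s ^ 2 - 1)) := by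
    have h2 : (s * p - f) * (s * p - f) ≤
        (Real.cos α * (Real.sinh (dist A D) * Real.sinh (dist A B))) *
          (Real.cos α * (Real.sinh (dist A D) * Real.sinh (dist A B))) :=
      mul_self_le_mul_self hnum0 hnum
    have h3 : (Real.cos α * (Real.sinh (dist A D) * Real.sinh (dist A B))) *
        (Real.cos α * (Real.sinh (dist A D) * Real.sinh (dist A B))) =
        Real.cos α ^ 2 * (Real.sinh (dist A B) ^ 2 * Real.sinh (dist A D) ^ 2) := by ring
    have h4 : (s * p - f) * (s * p - f) = (s * p - f) ^ 2 := by ring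
    rw [hS2, hP2] at h3
    linarith [h2, h3, h4]
  have hsincos : Real.sin α ^ 2 = 1 - Real.cos α ^ 2 := by
    have := Real.sin_sq_add_cos_sq α
    linarith
  have hp0 : (0:ℝ) < p := by linarith
  have hr0 : (0:ℝ) < r := by linarith
  have hp2pos : (0:ℝ) < p ^ 2 - 1 := by
    have h1 : (0:ℝ) < (p - 1) * (p + 1) := mul_pos (by linarith) (by linarith)
    have h2 : (p - 1) * (p + 1) = p ^ 2 - 1 := by ring
    linarith
  have hs2pos : (0:ℝ) < s ^ 2 - 1 := by
    have h1 : (0:ℝ) < (s - 1) * (s + 1) := mul_pos (by linarith) (by linarith)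
    have h2 : (s - 1) * (s + 1) = s ^ 2 - 1 := by ring
    linarith
  have hPS : (0:ℝ) < (p ^ 2 - 1) * (s ^ 2 - 1) := mul_pos hp2pos hs2pos
  -- final assembly
  have hmain : (p * Real.sin α) ^ 2 ≤ r ^ 2 := by
    have hXle : (p * s - f) ^ 2 ≤ Real.cos α ^ 2 * ((p ^ 2 - 1) * (s ^ 2 - 1)) := by
      have hid : (p * s - f) ^ 2 = (s * p - f) ^ 2 := by ring
      linarith [hsq]
    have hmul := mul_le_mul_of_nonneg_left hXle (sq_nonneg p)
    have step1 : p ^ 2 * Real.sin α ^ 2 * ((p ^ 2 - 1) * (s ^ 2 - 1)) ≤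
        p ^ 2 * ((p ^ 2 - 1) * (s ^ 2 - 1) - (p * s - f) ^ 2) := by
      have hid2 : p ^ 2 * Real.sin α ^ 2 * ((p ^ 2 - 1) * (s ^ 2 - 1)) =
          p ^ 2 * ((p ^ 2 - 1) * (s ^ 2 - 1)) -
            p ^ 2 * (Real.cos α ^ 2 * ((p ^ 2 - 1) * (s ^ 2 - 1))) +
            p ^ 2 * ((p ^ 2 - 1) * (s ^ 2 - 1)) * (Real.sin α ^ 2 + Real.cos α ^ 2 - 1) := by
        ring
      have hz : Real.sin α ^ 2 + Real.cos α ^ 2 - 1 = 0 := by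
        have := Real.sin_sq_add_cos_sq α
        linarith
      rw [hz, mul_zero, add_zero] at hid2
      linarith [hmul, hid2]
    have step2 : p ^ 2 * Real.sin α ^ 2 * ((p ^ 2 - 1) * (s ^ 2 - 1)) ≤
        r ^ 2 * ((p ^ 2 - 1) * (s ^ 2 - 1)) := le_trans step1 hB2
    have step3 : (p * Real.sin α) ^ 2 * ((p ^ 2 - 1) * (s ^ 2 - 1)) ≤
        r ^ 2 * ((p ^ 2 - 1) * (s ^ 2 - 1)) := by
      have hid3 : (p * Real.sin α) ^ 2 * ((p ^ 2 - 1) * (s ^ 2 - 1)) =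
          p ^ 2 * Real.sin α ^ 2 * ((p ^ 2 - 1) * (s ^ 2 - 1)) := by ring
      linarith
    exact (mul_le_mul_iff_of_pos_right hPS).1 step3
  have hfinal : p * Real.sin α ≤ r :=
    le_of_sq_le'' (mul_nonneg hp0.le hsinα) hr0 hmain
  exact hfinal
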